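/- Let m, λ be real constants with m ≠ 0 and let A : ℝ → ℝ be differentiable with A(t) ≠ 0 for all t. On ℝ⁴ with coordinates (t,x,y,z), define the Bianchi V metric g = diag(−A(t)²e^{mλt}, A(t)²e^{mλt}, A(t)²e^{2x}e^{m(λ−1)t}, A(t)²e^{2x}). Then the vector field X₃ = (2/m, 0, y, λz) is a conformal Killing vector of g with conformal factor ψ(t,x,y,z) = (2/m)·A′(t)/A(t) + λ: for all μ,ν and all points p, Σ_λ' [ξ^{λ'}(p)·∂_{λ'} g_{μν}(p) + g_{λ'ν}(p)·∂_μ ξ^{λ'}(p) + g_{μλ'}(p)·∂_ν ξ^{λ'}(p)] = 2ψ(p)·g_{μν}(p). -/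

import Mathlib

noncomputable section

/-- Partial derivative of `f` in the `μ`-th coordinate direction at `p`. -/
def pd (μ : Fin 4) (f : (Fin 4 → ℝ) → ℝ) (p : Fin 4 → ℝ) : ℝ :=
  fderiv ℝ f p (Pi.single μ 1)

/-- `ξ` is a conformal Killing vector of the metric `g` with conformal factor `ψ`. -/
def IsCKV (g : (Fin 4 → ℝ) → Matrix (Fin 4) (Fin 4) ℝ)
    (ξ : (Fin 4 → ℝ) → Fin 4 → ℝ) (ψ : (Fin 4 → ℝ) → ℝ) : Prop :=
  ∀ (μ ν : Fin 4) (p : Fin 4 → ℝ),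
    (∑ l : Fin 4, (ξ p l * pd l (fun q => g q μ ν) p
      + g p l ν * pd μ (fun q => ξ q l) p
      + g p μ l * pd ν (fun q => ξ q l) p)) = 2 * ψ p * g p μ ν

/-- `ξ` is a Killing vector of the metric `g`. -/
def IsKV (g : (Fin 4 → ℝ) → Matrix (Fin 4) (Fin 4) ℝ)
    (ξ : (Fin 4 → ℝ) → Fin 4 → ℝ) : Prop :=
  ∀ (μ ν : Fin 4) (p : Fin 4 → ℝ),
    (∑ l : Fin 4, (ξ p l * pd l (fun q => g q μ ν) p
      + g p l ν * pd μ (fun q => ξ q l) p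
      + g p μ l * pd ν (fun q => ξ q l) p)) = 0

lemma pd_eq {f : (Fin 4 → ℝ) → ℝ} {f' : (Fin 4 → ℝ) →L[ℝ] ℝ} {p : Fin 4 → ℝ}
    (h : HasFDerivAt f f' p) (μ : Fin 4) : pd μ f p = f' (Pi.single μ 1) := by
  rw [pd, h.fderiv]

lemma pd_const (c : ℝ) (μ : Fin 4) (p : Fin 4 → ℝ) : pd μ (fun _ => c) p = 0 := by
  simp [pd_eq (hasFDerivAt_const c p) μ]

lemma pd_coord (i μ : Fin 4) (p : Fin 4 → ℝ) :
    pd μ (fun q => q i) p = (Pi.single μ 1 : Fin 4 → ℝ) i := by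
  simpa using pd_eq (f := fun q => q i) (ContinuousLinearMap.proj i : (Fin 4 → ℝ) →L[ℝ] ℝ).hasFDerivAt μ

lemma pd_const_mul_coord (c : ℝ) (i μ : Fin 4) (p : Fin 4 → ℝ) :
    pd μ (fun q => c * q i) p = c * (Pi.single μ 1 : Fin 4 → ℝ) i := by
  have := ((ContinuousLinearMap.proj i : (Fin 4 → ℝ) →L[ℝ] ℝ).hasFDerivAt (x := p)).const_mul c
  simpa using pd_eq this μ

lemma hfd_comp0 {f : ℝ → ℝ} {f' : ℝ} {p : Fin 4 → ℝ} (h : HasDerivAt f f' (p 0)) :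
    HasFDerivAt (fun q : Fin 4 → ℝ => f (q 0))
      (f' • (ContinuousLinearMap.proj 0 : (Fin 4 → ℝ) →L[ℝ] ℝ)) p :=
  h.comp_hasFDerivAt p (ContinuousLinearMap.proj 0 : (Fin 4 → ℝ) →L[ℝ] ℝ).hasFDerivAt

lemma hfd_comp1 {f : ℝ → ℝ} {f' : ℝ} {p : Fin 4 → ℝ} (h : HasDerivAt f f' (p 1)) :
    HasFDerivAt (fun q : Fin 4 → ℝ => f (q 1))
      (f' • (ContinuousLinearMap.proj 1 : (Fin 4 → ℝ) →L[ℝ] ℝ)) p :=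
  h.comp_hasFDerivAt p (ContinuousLinearMap.proj 1 : (Fin 4 → ℝ) →L[ℝ] ℝ).hasFDerivAt

/-- the vector field `X₃ = (2/m)∂_t + y∂_y + λz∂_z` is a conformal Killing
vector of the Bianchi V metric `diag(−A²e^{mλt}, A²e^{mλt}, A²e^{2x}e^{m(λ−1)t}, A²e^{2x})`
with conformal factor `ψ = (2/m) A′(t)/A(t) + λ`. -/
theorem bianchiV_X3_is_CKV (m lam : ℝ) (hm : m ≠ 0)
    (A : ℝ → ℝ) (hA : Differentiable ℝ A) (hA0 : ∀ t, A t ≠ 0)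
    (g : (Fin 4 → ℝ) → Matrix (Fin 4) (Fin 4) ℝ)
    (hg : g = fun p => Matrix.diagonal
      ![-((A (p 0)) ^ 2 * Real.exp (m * lam * p 0)),
        (A (p 0)) ^ 2 * Real.exp (m * lam * p 0),
        (A (p 0)) ^ 2 * Real.exp (2 * p 1) * Real.exp (m * (lam - 1) * p 0),
        (A (p 0)) ^ 2 * Real.exp (2 * p 1)])
    (ξ : (Fin 4 → ℝ) → Fin 4 → ℝ)
    (hξ : ξ = fun p => ![2 / m, 0, p 2, lam * p 3])
    (ψ : (Fin 4 → ℝ) → ℝ)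
    (hψ : ψ = fun p => (2 / m) * deriv A (p 0) / A (p 0) + lam) :
    IsCKV g ξ ψ := by
  subst hg hξ hψ
  intro μ ν p
  have hA' : HasDerivAt A (deriv A (p 0)) (p 0) := (hA (p 0)).hasDerivAt
  have hsq : HasDerivAt (fun t => (A t) ^ 2) (2 * A (p 0) * deriv A (p 0)) (p 0) := by
    exact (hA'.pow 2).congr_deriv (by ring)
  have hexp0 : ∀ c : ℝ, HasDerivAt (fun t => Real.exp (c * t)) (c * Real.exp (c * p 0)) (p 0) := by
    intro c
    have := (Real.hasDerivAt_exp (c * p 0)).comp (p 0)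
      ((hasDerivAt_id (p 0)).const_mul c)
    exact this.congr_deriv (by ring)
  have hexp1 : HasDerivAt (fun t => Real.exp (2 * t)) (2 * Real.exp (2 * p 1)) (p 1) := by
    have := (Real.hasDerivAt_exp (2 * p 1)).comp (p 1)
      ((hasDerivAt_id (p 1)).const_mul (2:ℝ))
    exact this.congr_deriv (by ring)
  -- products of t-dependent factors
  have hsqe : ∀ c : ℝ, HasDerivAt (fun t => (A t) ^ 2 * Real.exp (c * t))
      ((2 * A (p 0) * deriv A (p 0) + c * (A (p 0)) ^ 2) * Real.exp (c * p 0)) (p 0) := by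
    intro c
    have := hsq.mul (hexp0 c)
    exact this.congr_deriv (by ring)
  -- pd of the four diagonal entries
  have e00 : ∀ l : Fin 4,
      pd l (fun q => -((A (q 0)) ^ 2 * Real.exp (m * lam * q 0))) p
        = -((2 * A (p 0) * deriv A (p 0) + m * lam * (A (p 0)) ^ 2) * Real.exp (m * lam * p 0))
          * (Pi.single l 1 : Fin 4 → ℝ) 0 := by
    intro l
    simpa using pd_eq (f := fun q => -((A (q 0)) ^ 2 * Real.exp (m * lam * q 0))) (hfd_comp0 (hsqe (m * lam))).neg l
  have e11 : ∀ l : Fin 4,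
      pd l (fun q => (A (q 0)) ^ 2 * Real.exp (m * lam * q 0)) p
        = (2 * A (p 0) * deriv A (p 0) + m * lam * (A (p 0)) ^ 2) * Real.exp (m * lam * p 0)
          * (Pi.single l 1 : Fin 4 → ℝ) 0 := by
    intro l
    simpa using pd_eq (hfd_comp0 (hsqe (m * lam))) l
  have e22 : ∀ l : Fin 4,
      pd l (fun q => (A (q 0)) ^ 2 * Real.exp (2 * q 1) * Real.exp (m * (lam - 1) * q 0)) p
        = ((2 * A (p 0) * deriv A (p 0) + m * (lam - 1) * (A (p 0)) ^ 2)
            * Real.exp (2 * p 1) * Real.exp (m * (lam - 1) * p 0))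
            * (Pi.single l 1 : Fin 4 → ℝ) 0
          + (2 * (A (p 0)) ^ 2 * Real.exp (2 * p 1) * Real.exp (m * (lam - 1) * p 0))
            * (Pi.single l 1 : Fin 4 → ℝ) 1 := by
    intro l
    have h := ((hfd_comp0 hsq).mul (hfd_comp1 hexp1)).mul (hfd_comp0 (hexp0 (m * (lam - 1))))
    have := pd_eq (f := fun q => (A (q 0)) ^ 2 * Real.exp (2 * q 1) * Real.exp (m * (lam - 1) * q 0)) h l
    simp only [ContinuousLinearMap.add_apply, ContinuousLinearMap.smul_apply,
      ContinuousLinearMap.proj_apply, smul_eq_mul, Pi.mul_apply] at this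
    rw [this]; ring
  have e33 : ∀ l : Fin 4,
      pd l (fun q => (A (q 0)) ^ 2 * Real.exp (2 * q 1)) p
        = (2 * A (p 0) * deriv A (p 0) * Real.exp (2 * p 1)) * (Pi.single l 1 : Fin 4 → ℝ) 0
          + (2 * (A (p 0)) ^ 2 * Real.exp (2 * p 1)) * (Pi.single l 1 : Fin 4 → ℝ) 1 := by
    intro l
    have h := (hfd_comp0 hsq).mul (hfd_comp1 hexp1)
    have := pd_eq (f := fun q => (A (q 0)) ^ 2 * Real.exp (2 * q 1)) h l
    simp only [ContinuousLinearMap.add_apply, ContinuousLinearMap.smul_apply,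
      ContinuousLinearMap.proj_apply, smul_eq_mul] at this
    rw [this]; ring
  have hA0' := hA0 (p 0)
  fin_cases μ <;> fin_cases ν <;>
    · simp [Fin.sum_univ_four, Matrix.diagonal_apply, pd_const, pd_coord, pd_const_mul_coord,
        e00, e11, e22, e33, Pi.single_apply]
      try field_simp
      try ring
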